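/- The relations K₁₂ K₁₃ K₂₃ = θ₀ P₁₃ K₂₃ and K₁₂ P₂₃ K₁₂ = K₁₂ hold in the triple graded tensor product. -/

import Mathlib

open Matrix BigOperators Finset

noncomputable section

namespace OspYangian

variable (M N : ℕ) (θ₀ : ℤ)

/-- The grading exponent `[i] ∈ {0,1}`, defined so that `(-1)^[i] = θ₀` for `i < M`
and `(-1)^[i] = -θ₀` for `M ≤ i < M+N` (0-indexed). -/
def gr (i : Fin (M + N)) : ℕ :=
  if (i : ℕ) < M then (if θ₀ = 1 then 0 else 1) else (if θ₀ = 1 then 1 else 0)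

/-- The sign `θ_i`: `+1` for `i < M + N/2`, `-1` otherwise (0-indexed). -/
def th (i : Fin (M + N)) : ℂ :=
  if (i : ℕ) < M + N / 2 then 1 else -1

/-- The conjugate index `ī`: `M+1-i` resp. `2M+N+1-i` in 1-indexed notation. -/
def bar (i : Fin (M + N)) : Fin (M + N) :=
  if _h : (i : ℕ) < M then ⟨M - 1 - (i : ℕ), by omega⟩
  else ⟨2 * M + N - 1 - (i : ℕ), by have := i.isLt; omega⟩

/-- Coefficient matrices of elements of the graded tensor square of `gl(M|N)`:
the entry at `((i,k),(j,l))` is the coefficient of `E_{ij} ⊗ E_{kl}`. -/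
abbrev Mat := Matrix (Fin (M + N) × Fin (M + N)) (Fin (M + N) × Fin (M + N)) ℂ

/-- Multiplication in the graded tensor product algebra:
`(A⊗B)(C⊗D) = (-1)^{[B][C]} AC ⊗ BD` on homogeneous elements. -/
def gmul (A B : Mat M N) : Mat M N := fun p q =>
  ∑ j : Fin (M + N), ∑ l : Fin (M + N),
    (-1 : ℂ) ^ ((gr M N θ₀ p.2 + gr M N θ₀ l) * (gr M N θ₀ j + gr M N θ₀ q.1)) *
      A p (j, l) * B (j, l) q

/-- The superpermutation `P = Σ_{i,j} (-1)^{[j]} E_{ij} ⊗ E_{ji}`. -/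
def P : Mat M N := fun p q =>
  if p.1 = q.2 ∧ p.2 = q.1 then (-1 : ℂ) ^ gr M N θ₀ p.2 else 0

/-- `K = Σ_{i,j} (-1)^{[i][j]} θ_i θ_j E_{j̄ ī} ⊗ E_{ji}`. -/
def K : Mat M N := fun p q =>
  if p.1 = bar M N p.2 ∧ q.1 = bar M N q.2 then
    (-1 : ℂ) ^ (gr M N θ₀ q.2 * gr M N θ₀ p.2) * th M N q.2 * th M N p.2
  else 0

/-- Coefficient matrices of elements of the graded triple tensor product. -/
abbrev Mat3 := Matrix (Fin (M + N) × Fin (M + N) × Fin (M + N))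
  (Fin (M + N) × Fin (M + N) × Fin (M + N)) ℂ

/-- Multiplication in the graded triple tensor product algebra: the sign is
`(-1)^{(d₂+d₃)e₁ + d₃e₂}` where `d_a`, `e_a` are the degrees of the `a`-th factors. -/
def gmul3 (A B : Mat3 M N) : Mat3 M N := fun p q =>
  ∑ m : Fin (M + N) × Fin (M + N) × Fin (M + N),
    (-1 : ℂ) ^ ((gr M N θ₀ p.2.1 + gr M N θ₀ m.2.1 + gr M N θ₀ p.2.2 + gr M N θ₀ m.2.2) *
          (gr M N θ₀ m.1 + gr M N θ₀ q.1) +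
        (gr M N θ₀ p.2.2 + gr M N θ₀ m.2.2) * (gr M N θ₀ m.2.1 + gr M N θ₀ q.2.1)) *
      A p m * B m q

/-- Embedding `X ↦ X₁₂ = X ⊗ I` into the triple tensor product. -/
def emb12 (X : Mat M N) : Mat3 M N := fun p q =>
  if p.2.2 = q.2.2 then X (p.1, p.2.1) (q.1, q.2.1) else 0

/-- Embedding `X ↦ X₁₃` into the triple tensor product. -/
def emb13 (X : Mat M N) : Mat3 M N := fun p q =>
  if p.2.1 = q.2.1 then X (p.1, p.2.2) (q.1, q.2.2) else 0

/-- Embedding `X ↦ X₂₃ = I ⊗ X` into the triple tensor product. -/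
def emb23 (X : Mat M N) : Mat3 M N := fun p q =>
  if p.1 = q.1 then X p.2 q.2 else 0

section Aux

variable {M N : ℕ} {θ₀ : ℤ}

lemma bar_lt {i : Fin (M+N)} (h : (i:ℕ) < M) : ((bar M N i : Fin (M+N)) : ℕ) < M := by
  unfold bar; rw [dif_pos h]; simp; omega

lemma bar_ge {i : Fin (M+N)} (h : ¬ (i:ℕ) < M) : ¬ ((bar M N i : Fin (M+N)) : ℕ) < M := by
  unfold bar; rw [dif_neg h]; have := i.isLt; simp; omega

lemma bar_bar (i : Fin (M+N)) : bar M N (bar M N i) = i := by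
  have hlt := i.isLt
  by_cases h : (i:ℕ) < M
  · have h2 := bar_lt h
    apply Fin.ext
    unfold bar at h2 ⊢
    rw [dif_pos h] at h2 ⊢
    rw [dif_pos h2]
    simp; omega
  · have h2 := bar_ge h
    apply Fin.ext
    unfold bar at h2 ⊢
    rw [dif_neg h] at h2 ⊢
    rw [dif_neg h2]
    simp; omega

lemma gr_bar (i : Fin (M+N)) : gr M N θ₀ (bar M N i) = gr M N θ₀ i := by
  by_cases h : (i:ℕ) < M
  · have h2 := bar_lt h
    unfold gr; rw [if_pos h, if_pos h2]
  · have h2 := bar_ge h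
    unfold gr; rw [if_neg h, if_neg h2]

lemma gr_cases (i : Fin (M+N)) : gr M N θ₀ i = 0 ∨ gr M N θ₀ i = 1 := by
  unfold gr; split_ifs <;> simp

lemma th_cases (i : Fin (M+N)) : th M N i = 1 ∨ th M N i = -1 := by
  unfold th; split_ifs <;> simp

lemma th_key (hθ : θ₀ = 1 ∨ θ₀ = -1) (hN : Even N) (i : Fin (M+N)) :
    th M N i = (θ₀ : ℂ) * (-1)^(gr M N θ₀ i) * th M N (bar M N i) := by
  obtain ⟨k, hk⟩ := hN
  have hlt := i.isLt
  have hN2 : N / 2 = k := by omega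
  by_cases h : (i:ℕ) < M
  · have h2 := bar_lt h
    unfold th gr bar
    rw [dif_pos h] at *
    rcases hθ with h1 | h1 <;> subst h1 <;> simp only [if_pos h] <;>
      norm_num <;> split_ifs <;> norm_num <;> omega
  · have h2 := bar_ge h
    unfold th gr bar
    rw [dif_neg h] at *
    rcases hθ with h1 | h1 <;> subst h1 <;> simp only [if_neg h] <;>
      norm_num <;> split_ifs <;> norm_num <;> omega
lemma C_eq :
    gmul3 M N θ₀ (emb13 M N (K M N θ₀)) (emb23 M N (K M N θ₀)) = fun p q =>
      if p.1 = bar M N p.2.2 ∧ p.2.1 = q.1 ∧ q.2.1 = bar M N q.2.2 then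
        (-1:ℂ) ^ (gr M N θ₀ p.2.2 * gr M N θ₀ q.2.2 + gr M N θ₀ p.2.1) *
          th M N p.2.2 * th M N q.2.2
      else 0 := by
  funext p q
  unfold gmul3
  rw [Finset.sum_eq_single (p.2.1, p.2.1, bar M N p.2.1)]
  · simp only [emb13, emb23, K, bar_bar, gr_bar, and_true, true_and, if_true]
    by_cases hc : p.1 = bar M N p.2.2 ∧ p.2.1 = q.1 ∧ q.2.1 = bar M N q.2.2
    · rw [if_pos hc]
      obtain ⟨h1, h2, h3⟩ := hc
      rw [if_pos h1, if_pos h2, if_pos h3, ← h2, h3, gr_bar]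
      rcases gr_cases (M:=M) (N:=N) (θ₀:=θ₀) p.2.1 with a|a <;>
      rcases gr_cases (M:=M) (N:=N) (θ₀:=θ₀) p.2.2 with b|b <;>
      rcases gr_cases (M:=M) (N:=N) (θ₀:=θ₀) q.2.2 with c|c <;>
      rcases th_cases (M:=M) (N:=N) (bar M N p.2.1) with hT|hT <;>
        rw [a, b, c, hT] <;> norm_num <;> ring
    · rw [if_neg hc]
      split_ifs with h1 h2 h3 <;> try ring
      exact absurd ⟨h1, h2, h3⟩ hc
  · rintro ⟨m1, m2, m3⟩ _ hm
    simp only [emb13, emb23, K]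
    split_ifs with h1 h2 h3 h4 <;> try ring
    exfalso
    apply hm
    obtain ⟨-, h2⟩ := h2
    obtain ⟨h4, -⟩ := h4
    have e3 : m3 = bar M N p.2.1 := by rw [h1, h4, bar_bar]
    have e1 : m1 = p.2.1 := by rw [h2, e3, bar_bar]
    rw [e1, e3, ← h1]
  · intro h
    exact absurd (Finset.mem_univ _) h
lemma bar_eq_comm {i j : Fin (M+N)} : i = bar M N j ↔ j = bar M N i := by
  constructor <;> rintro rfl <;> rw [bar_bar]

lemma D_eq :
    gmul3 M N θ₀ (emb12 M N (K M N θ₀))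
        (gmul3 M N θ₀ (emb13 M N (K M N θ₀)) (emb23 M N (K M N θ₀))) = fun p q =>
      if p.1 = bar M N p.2.1 ∧ p.2.2 = q.1 ∧ q.2.1 = bar M N q.2.2 then
        (-1:ℂ) ^ (gr M N θ₀ p.2.2 * gr M N θ₀ q.2.2 + gr M N θ₀ p.2.2 +
            gr M N θ₀ p.2.2 * gr M N θ₀ p.2.1) *
          th M N p.2.1 * th M N q.2.2
      else 0 := by
  rw [C_eq]
  funext p q
  unfold gmul3
  rw [Finset.sum_eq_single (bar M N p.2.2, p.2.2, p.2.2)]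
  · simp only [emb12, K, bar_bar, gr_bar, and_true, true_and, if_true]
    by_cases hc : p.1 = bar M N p.2.1 ∧ p.2.2 = q.1 ∧ q.2.1 = bar M N q.2.2
    · rw [if_pos hc]
      obtain ⟨h1, h2, h3⟩ := hc
      rw [if_pos h1, if_pos ⟨h2, h3⟩, ← h2, h3, gr_bar]
      rcases gr_cases (M:=M) (N:=N) (θ₀:=θ₀) p.2.1 with a|a <;>
      rcases gr_cases (M:=M) (N:=N) (θ₀:=θ₀) p.2.2 with b|b <;>
      rcases gr_cases (M:=M) (N:=N) (θ₀:=θ₀) q.2.2 with c|c <;>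
      rcases th_cases (M:=M) (N:=N) p.2.2 with hT|hT <;>
        rw [a, b, c, hT] <;> norm_num <;> ring
    · rw [if_neg hc]
      split_ifs with h1 h2 <;> try ring
      exact absurd ⟨h1, h2.1, h2.2⟩ hc
  · rintro ⟨m1, m2, m3⟩ _ hm
    simp only [emb12, K]
    split_ifs with h1 h2 h3 <;> try ring
    exfalso
    apply hm
    obtain ⟨-, h2⟩ := h2
    obtain ⟨h3, -⟩ := h3
    have hb : bar M N m2 = bar M N m3 := by rw [← h2, h3]
    have e2 : m2 = m3 := by rw [← bar_bar (M:=M) (N:=N) m2, hb, bar_bar]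
    rw [show m1 = bar M N p.2.2 by rw [h3, ← h1],
        show m2 = p.2.2 by rw [e2, ← h1], show m3 = p.2.2 from h1.symm]
  · intro h
    exact absurd (Finset.mem_univ _) h
lemma E_eq :
    gmul3 M N θ₀ (emb13 M N (P M N θ₀)) (emb23 M N (K M N θ₀)) = fun p q =>
      if p.1 = bar M N p.2.1 ∧ p.2.2 = q.1 ∧ q.2.1 = bar M N q.2.2 then
        (-1:ℂ) ^ (gr M N θ₀ p.2.1 * gr M N θ₀ p.2.2 + gr M N θ₀ p.2.2 * gr M N θ₀ q.2.2 +
            gr M N θ₀ p.2.1 + gr M N θ₀ p.2.2) *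
          th M N (bar M N p.2.1) * th M N q.2.2
      else 0 := by
  funext p q
  unfold gmul3
  rw [Finset.sum_eq_single (p.2.2, p.2.1, p.1)]
  · simp only [emb13, emb23, P, K, bar_bar, gr_bar, and_true, true_and, if_true,
      and_self, show (p.2.1 = bar M N p.1) ↔ (p.1 = bar M N p.2.1) from bar_eq_comm]
    by_cases hc : p.1 = bar M N p.2.1 ∧ p.2.2 = q.1 ∧ q.2.1 = bar M N q.2.2
    · rw [if_pos hc]
      obtain ⟨h1, h2, h3⟩ := hc
      rw [if_pos h2, if_pos ⟨h1, h3⟩, ← h2, h3, h1]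
      simp only [gr_bar]
      rcases gr_cases (M:=M) (N:=N) (θ₀:=θ₀) p.2.1 with a|a <;>
      rcases gr_cases (M:=M) (N:=N) (θ₀:=θ₀) p.2.2 with b|b <;>
      rcases gr_cases (M:=M) (N:=N) (θ₀:=θ₀) q.2.2 with c|c <;>
        rw [a, b, c] <;> norm_num <;> ring
    · rw [if_neg hc]
      split_ifs with h1 h2 <;> try ring
      exact absurd ⟨h2.1, h1, h2.2⟩ hc
  · rintro ⟨m1, m2, m3⟩ _ hm
    simp only [emb13, emb23, P, K]
    split_ifs with h1 h2 h3 <;> try ring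
    exfalso
    apply hm
    obtain ⟨e3, e1⟩ := h2
    rw [← e1, ← h1, ← e3]
  · intro h
    exact absurd (Finset.mem_univ _) h
lemma part1 (hθ : θ₀ = 1 ∨ θ₀ = -1) (hN : Even N) :
    gmul3 M N θ₀ (emb12 M N (K M N θ₀))
        (gmul3 M N θ₀ (emb13 M N (K M N θ₀)) (emb23 M N (K M N θ₀))) =
      (θ₀ : ℂ) • gmul3 M N θ₀ (emb13 M N (P M N θ₀)) (emb23 M N (K M N θ₀)) := by
  rw [D_eq, E_eq]
  funext p q
  erw [Matrix.smul_apply]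
  simp only [Matrix.smul_apply, smul_eq_mul, mul_ite, mul_zero]
  split_ifs with h
  · rw [th_key hθ hN p.2.1]
    rcases gr_cases (M:=M) (N:=N) (θ₀:=θ₀) p.2.1 with a|a <;>
    rcases gr_cases (M:=M) (N:=N) (θ₀:=θ₀) p.2.2 with b|b <;>
    rcases gr_cases (M:=M) (N:=N) (θ₀:=θ₀) q.2.2 with c|c <;>
    rcases th_cases (M:=M) (N:=N) (bar M N p.2.1) with hT|hT <;>
    rcases hθ with rfl | rfl <;>
      rw [a, b, c, hT] <;> norm_num
  · rfl

lemma A_eq :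
    gmul3 M N θ₀ (emb23 M N (P M N θ₀)) (emb12 M N (K M N θ₀)) = fun p q =>
      if p.1 = bar M N p.2.2 ∧ p.2.1 = q.2.2 ∧ q.1 = bar M N q.2.1 then
        (-1:ℂ) ^ ((gr M N θ₀ p.2.2 + gr M N θ₀ p.2.1) * (gr M N θ₀ p.2.2 + gr M N θ₀ q.2.1) +
            gr M N θ₀ p.2.2 + gr M N θ₀ q.2.1 * gr M N θ₀ p.2.2) *
          th M N q.2.1 * th M N p.2.2
      else 0 := by
  funext p q
  unfold gmul3
  rw [Finset.sum_eq_single (p.1, p.2.2, p.2.1)]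
  · simp only [emb12, emb23, P, K, bar_bar, gr_bar, and_true, true_and, if_true, and_self,
      show (p.1 = bar M N p.2.2) ↔ (p.1 = bar M N p.2.2) from Iff.rfl]
    by_cases hc : p.1 = bar M N p.2.2 ∧ p.2.1 = q.2.2 ∧ q.1 = bar M N q.2.1
    · rw [if_pos hc]
      obtain ⟨h1, h2, h3⟩ := hc
      rw [if_pos h2, if_pos ⟨h1, h3⟩, h3, h1]
      simp only [gr_bar]
      rcases gr_cases (M:=M) (N:=N) (θ₀:=θ₀) p.2.1 with a|a <;>
      rcases gr_cases (M:=M) (N:=N) (θ₀:=θ₀) p.2.2 with b|b <;>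
      rcases gr_cases (M:=M) (N:=N) (θ₀:=θ₀) q.2.1 with c|c <;>
        rw [a, b, c] <;> norm_num <;> ring
    · rw [if_neg hc]
      split_ifs with h1 h2 <;> try ring
      exact absurd ⟨h2.1, h1, h2.2⟩ hc
  · rintro ⟨m1, m2, m3⟩ _ hm
    simp only [emb12, emb23, P, K]
    split_ifs with h1 h2 h3 <;> try ring
    exfalso
    apply hm
    obtain ⟨e2, e3⟩ := h2
    rw [← h1, ← e2, ← e3]
  · intro h
    exact absurd (Finset.mem_univ _) h
lemma part2 :
    gmul3 M N θ₀ (emb12 M N (K M N θ₀))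
        (gmul3 M N θ₀ (emb23 M N (P M N θ₀)) (emb12 M N (K M N θ₀))) =
      emb12 M N (K M N θ₀) := by
  rw [A_eq]
  funext p q
  unfold gmul3
  rw [Finset.sum_eq_single (bar M N p.2.2, p.2.2, p.2.2)]
  · simp only [emb12, K, bar_bar, gr_bar, and_true, true_and, if_true]
    by_cases hc : p.1 = bar M N p.2.1 ∧ p.2.2 = q.2.2 ∧ q.1 = bar M N q.2.1
    · obtain ⟨h1, h2, h3⟩ := hc
      rw [if_pos h1, if_pos ⟨h2, h3⟩, if_pos h2, if_pos ⟨h1, h3⟩, h3]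
      simp only [gr_bar]
      rcases gr_cases (M:=M) (N:=N) (θ₀:=θ₀) p.2.1 with a|a <;>
      rcases gr_cases (M:=M) (N:=N) (θ₀:=θ₀) p.2.2 with b|b <;>
      rcases gr_cases (M:=M) (N:=N) (θ₀:=θ₀) q.2.1 with c|c <;>
      rcases th_cases (M:=M) (N:=N) p.2.2 with hT|hT <;>
        rw [a, b, c, hT] <;> norm_num <;> ring
    · split_ifs with g1 g2 g3 g4 g5 g6 g7 g8 g9 g10 <;> try ring
      all_goals (exfalso; apply hc)
      all_goals tauto
  · rintro ⟨m1, m2, m3⟩ _ hm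
    simp only [emb12, K]
    split_ifs with h1 h2 h3 <;> try ring
    exfalso
    apply hm
    obtain ⟨-, h2⟩ := h2
    obtain ⟨h3, -⟩ := h3
    have hb : bar M N m2 = bar M N m3 := by rw [← h2, h3]
    have e2 : m2 = m3 := by rw [← bar_bar (M:=M) (N:=N) m2, hb, bar_bar]
    rw [show m1 = bar M N p.2.2 by rw [h3, ← h1],
        show m2 = p.2.2 by rw [e2, ← h1], show m3 = p.2.2 from h1.symm]
  · intro h
    exact absurd (Finset.mem_univ _) h


end Aux

/-- `K₁₂ K₁₃ K₂₃ = θ₀ P₁₃ K₂₃` and `K₁₂ P₂₃ K₁₂ = K₁₂`. -/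
theorem statement8 (hθ : θ₀ = 1 ∨ θ₀ = -1) (hN : Even N) :
    gmul3 M N θ₀ (emb12 M N (K M N θ₀))
        (gmul3 M N θ₀ (emb13 M N (K M N θ₀)) (emb23 M N (K M N θ₀))) =
      (θ₀ : ℂ) • gmul3 M N θ₀ (emb13 M N (P M N θ₀)) (emb23 M N (K M N θ₀)) ∧
    gmul3 M N θ₀ (emb12 M N (K M N θ₀))
        (gmul3 M N θ₀ (emb23 M N (P M N θ₀)) (emb12 M N (K M N θ₀))) =
      emb12 M N (K M N θ₀) := by
  exact ⟨part1 hθ hN, part2⟩
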